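/- arXiv:2204.09146 — 7 statements merged into one kernel-verified Lean document; each statement's English description precedes it below -/
import Mathlib

section
/- Let T be a bounded linear operator on a complex Hilbert space H that is both cohyponormal (‖Tx‖ ≤ ‖T*x‖ for all x ∈ H) and complex symmetric (there is a conjugation C on H with C T* C = T). Then T is normal, i.e. T T* = T* T. -/
open scoped InnerProductSpace ComplexConjugate

/-- A bounded operator on a complex Hilbert space that is both cohyponormal and complex
symmetric is normal. -/
theorem cohyponormal_complex_symmetric_is_normal
    {H : Type*} [NormedAddCommGroup H] [InnerProductSpace ℂ H] [CompleteSpace H]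
    (T : H →L[ℂ] H)
    (hcohypo : ∀ x : H, ‖T x‖ ≤ ‖ContinuousLinearMap.adjoint T x‖)
    (C : H → H)
    (hC_add : ∀ x y : H, C (x + y) = C x + C y)
    (hC_smul : ∀ (a : ℂ) (x : H), C (a • x) = (conj a) • C x)
    (hC_inv : ∀ x : H, C (C x) = x)
    (hC_inner : ∀ x y : H, ⟪C x, C y⟫_ℂ = ⟪y, x⟫_ℂ)
    (hsym : ∀ x : H, C (ContinuousLinearMap.adjoint T (C x)) = T x) :
    T ∘L ContinuousLinearMap.adjoint T = ContinuousLinearMap.adjoint T ∘L T := by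
  set S := ContinuousLinearMap.adjoint T with hS
  -- C is isometric
  have hCnorm : ∀ x : H, ‖C x‖ = ‖x‖ := by
    intro x
    have h := hC_inner x x
    rw [@norm_eq_sqrt_re_inner ℂ _ _ _ _ (C x), @norm_eq_sqrt_re_inner ℂ _ _ _ _ x, h]
  -- T = C S C pointwise (from hsym), so S x = C T C x
  have hsym' : ∀ x : H, C (T (C x)) = S x := by
    intro x
    have := hsym (C x)
    rw [hC_inv] at this
    rw [← this, hC_inv]
  -- ‖S x‖ ≤ ‖T x‖
  have hrev : ∀ x : H, ‖S x‖ ≤ ‖T x‖ := by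
    intro x
    have h1 : ‖S x‖ = ‖T (C x)‖ := by rw [← hsym' x, hCnorm]
    have h2 : ‖S (C x)‖ = ‖T x‖ := by
      rw [← hsym x, hCnorm]
    rw [h1, ← h2]
    exact hcohypo (C x)
  have heq : ∀ x : H, ‖T x‖ = ‖S x‖ := fun x => le_antisymm (hcohypo x) (hrev x)
  -- conclude normality
  have key : ((T ∘L S : H →L[ℂ] H) : H →ₗ[ℂ] H) = ((S ∘L T : H →L[ℂ] H) : H →ₗ[ℂ] H) := by
    rw [← ext_inner_map]
    intro x
    simp only [ContinuousLinearMap.coe_coe, ContinuousLinearMap.comp_apply]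
    have h1 : ⟪T (S x), x⟫_ℂ = ⟪S x, S x⟫_ℂ := by
      rw [hS, ContinuousLinearMap.adjoint_inner_right]
    have h2 : ⟪S (T x), x⟫_ℂ = ⟪T x, T x⟫_ℂ := by
      rw [hS, ContinuousLinearMap.adjoint_inner_left]
    rw [h1, h2, inner_self_eq_norm_sq_to_K, inner_self_eq_norm_sq_to_K, heq x]
  exact ContinuousLinearMap.coe_injective key
end

section
/- Let a ∈ (0,1) and let b ∈ ℂ with Re(b) > 0. Set φ(w) = a·w + b, ψ(w) = a⁻¹·w + a⁻¹·conj(b), and f(w) = 1/(1+w). Then N(f ∘ φ) = π/(a·(1 + Re b)), a⁻²·N(f ∘ ψ) = π/(a + Re b), and consequently N(f ∘ φ) > a⁻²·N(f ∘ ψ). (Since the adjoint of the composition operator C_φ on the Hardy space H²(ℂ₊) is a⁻¹·C_ψ, the function f = K₁ witnesses that C_φ is not cohyponormal when 0 < a < 1 and Re(b) > 0.) -/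
open scoped ComplexConjugate
open MeasureTheory Real

lemma int_base (c : ℝ) (hc : 0 < c) : ∫ t : ℝ, (c^2 + t^2)⁻¹ = π / c := by
  have h1 : ∀ t : ℝ, (c^2 + t^2)⁻¹ = c⁻¹ * c⁻¹ * (1 + (c⁻¹ * t)^2)⁻¹ := by
    intro t
    rw [mul_pow]
    field_simp
  simp_rw [h1]
  rw [integral_const_mul, Measure.integral_comp_mul_left (fun s => (1 + s^2)⁻¹) c⁻¹,
    integral_univ_inv_one_add_sq, inv_inv, abs_of_pos hc]
  field_simp
  ring

lemma integrable_aff (c k d : ℝ) (hc : 0 < c) (hk : k ≠ 0) :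
    Integrable (fun y : ℝ => (c^2 + (k*y+d)^2)⁻¹) := by
  have h0 : Integrable (fun t : ℝ => (c^2 + t^2)⁻¹) := by
    have h1 : ∀ t : ℝ, (c^2 + t^2)⁻¹ = c⁻¹ * c⁻¹ * (1 + (c⁻¹ * t)^2)⁻¹ := by
      intro t; rw [mul_pow]; field_simp
    simp_rw [h1]
    exact ((integrable_inv_one_add_sq.comp_mul_left' (inv_ne_zero hc.ne')).const_mul _)
  have h2 : Integrable (fun y : ℝ => (c^2 + (y+d)^2)⁻¹) := h0.comp_add_right d
  exact h2.comp_mul_left' hk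

lemma int_aff (c k d : ℝ) (hc : 0 < c) (hk : 0 < k) :
    ∫ y : ℝ, (c^2 + (k*y+d)^2)⁻¹ = π / (k * c) := by
  rw [Measure.integral_comp_mul_left (fun t => (c^2 + (t+d)^2)⁻¹) k]
  rw [integral_add_right_eq_self (fun t : ℝ => (c^2 + t^2)⁻¹) d]
  rw [int_base c hc, abs_of_pos (inv_pos.2 hk), smul_eq_mul]
  field_simp


lemma lint_aff (c k d : ℝ) (hc : 0 < c) (hk : 0 < k) :
    ∫⁻ y : ℝ, ENNReal.ofReal ((c^2 + (k*y+d)^2)⁻¹) = ENNReal.ofReal (π / (k * c)) := by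
  rw [← ofReal_integral_eq_lintegral_ofReal (integrable_aff c k d hc hk.ne')
    (Filter.Eventually.of_forall fun y => by positivity), int_aff c k d hc hk]

lemma norm_inv_sq (z : ℂ) : ((‖(1:ℂ)/z‖₊ : ENNReal))^2 = ENNReal.ofReal ((z.re^2 + z.im^2)⁻¹) := by
  rw [← ENNReal.ofReal_coe_nnreal, ← ENNReal.ofReal_pow (by positivity)]
  congr 1
  rw [coe_nnnorm, one_div, norm_inv, inv_pow]
  congr 1
  rw [Complex.sq_norm, Complex.normSq_apply]
  ring

lemma sup_aff (p q : ℝ) (hp : 0 < p) (hq : 0 < q) :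
    ⨆ x > (0:ℝ), ENNReal.ofReal (π / (p + q * x)) = ENNReal.ofReal (π / p) := by
  apply le_antisymm
  · refine iSup₂_le fun x hx => ENNReal.ofReal_le_ofReal ?_
    have hx' : (0:ℝ) < x := hx
    gcongr
    nlinarith
  · have hcont : Filter.Tendsto (fun x : ℝ => ENNReal.ofReal (π / (p + q * x)))
        (nhdsWithin 0 (Set.Ioi 0)) (nhds (ENNReal.ofReal (π / p))) := by
      apply Filter.Tendsto.mono_left _ nhdsWithin_le_nhds
      have : Filter.Tendsto (fun x : ℝ => π / (p + q * x)) (nhds 0) (nhds (π / p)) := by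
        have hca : ContinuousAt (fun x : ℝ => π / (p + q * x)) 0 :=
          ContinuousAt.div continuousAt_const (by fun_prop) (by simpa using hp.ne')
        simpa using hca.tendsto
      exact (ENNReal.continuous_ofReal.tendsto _).comp this
    refine le_of_tendsto hcont ?_
    filter_upwards [self_mem_nhdsWithin] with x hx
    exact le_iSup₂ (f := fun x (_ : x > 0) => ENNReal.ofReal (π / (p + q * x))) x hx

/-- `N f = sup_{x>0} ∫_ℝ |f(x+iy)|² dy`, with values in `[0,∞]`; up to a factor of `π`
this is the squared Hardy-space norm on the right half-plane. -/
noncomputable def N (f : ℂ → ℂ) : ENNReal :=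
  ⨆ x > (0 : ℝ), ∫⁻ y : ℝ, (‖f (↑x + ↑y * Complex.I)‖₊ : ENNReal) ^ 2

/-- For `0 < a < 1`, `Re b > 0`, `φ(w) = a·w + b`, `ψ(w) = a⁻¹·w + a⁻¹·conj b` and
`f(w) = 1/(1+w)`: `N(f∘φ) = π/(a(1+Re b))`, `a⁻²·N(f∘ψ) = π/(a+Re b)`, and hence
`N(f∘φ) > a⁻²·N(f∘ψ)`, witnessing that `C_φ` is not cohyponormal. -/
theorem not_cohyponormal_witness
    (a : ℝ) (ha : a ∈ Set.Ioo (0 : ℝ) 1) (b : ℂ) (hb : 0 < b.re)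
    (φ ψ f : ℂ → ℂ)
    (hφ : ∀ w, φ w = (a : ℂ) * w + b)
    (hψ : ∀ w, ψ w = (a : ℂ)⁻¹ * w + (a : ℂ)⁻¹ * conj b)
    (hf : ∀ w, f w = 1 / (1 + w)) :
    N (f ∘ φ) = ENNReal.ofReal (Real.pi / (a * (1 + b.re))) ∧
    ENNReal.ofReal (a⁻¹ ^ 2) * N (f ∘ ψ) = ENNReal.ofReal (Real.pi / (a + b.re)) ∧
    ENNReal.ofReal (a⁻¹ ^ 2) * N (f ∘ ψ) < N (f ∘ φ) := by
  obtain ⟨ha0, ha1⟩ := ha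
  have ha0' : (0:ℝ) < a⁻¹ := inv_pos.2 ha0
  -- N (f ∘ φ)
  have hNφ : N (f ∘ φ) = ENNReal.ofReal (π / (a * (1 + b.re))) := by
    unfold N
    have hstep : ∀ x : ℝ, x > 0 →
        (∫⁻ y : ℝ, (‖(f ∘ φ) (↑x + ↑y * Complex.I)‖₊ : ENNReal) ^ 2)
          = ENNReal.ofReal (π / (a * (1 + b.re) + (a*a) * x)) := by
      intro x hx
      have hpt : ∀ y : ℝ, (‖(f ∘ φ) (↑x + ↑y * Complex.I)‖₊ : ENNReal) ^ 2
          = ENNReal.ofReal (((1 + a*x + b.re)^2 + (a*y + b.im)^2)⁻¹) := by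
        intro y
        simp only [Function.comp_apply, hφ, hf]
        rw [norm_inv_sq]
        congr 2 <;> simp <;> ring
      simp_rw [hpt]
      rw [lint_aff (1 + a*x + b.re) a b.im (by nlinarith) ha0]
      congr 1
      ring
    calc ⨆ x > (0:ℝ), ∫⁻ y : ℝ, (‖(f ∘ φ) (↑x + ↑y * Complex.I)‖₊ : ENNReal) ^ 2
        = ⨆ x > (0:ℝ), ENNReal.ofReal (π / (a * (1 + b.re) + (a*a) * x)) :=
          iSup_congr fun x => iSup_congr fun hx => hstep x hx
      _ = ENNReal.ofReal (π / (a * (1 + b.re))) :=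
          sup_aff _ _ (by nlinarith) (by nlinarith)
  -- N (f ∘ ψ)
  have hNψ : N (f ∘ ψ) = ENNReal.ofReal (π / (a⁻¹ + (a⁻¹*a⁻¹) * b.re)) := by
    unfold N
    have hstep : ∀ x : ℝ, x > 0 →
        (∫⁻ y : ℝ, (‖(f ∘ ψ) (↑x + ↑y * Complex.I)‖₊ : ENNReal) ^ 2)
          = ENNReal.ofReal (π / ((a⁻¹ + (a⁻¹*a⁻¹) * b.re) + (a⁻¹*a⁻¹) * x)) := by
      intro x hx
      have hpt : ∀ y : ℝ, (‖(f ∘ ψ) (↑x + ↑y * Complex.I)‖₊ : ENNReal) ^ 2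
          = ENNReal.ofReal (((1 + a⁻¹*x + a⁻¹*b.re)^2 + (a⁻¹*y + -(a⁻¹*b.im))^2)⁻¹) := by
        intro y
        simp only [Function.comp_apply, hψ, hf]
        rw [norm_inv_sq]
        congr 2 <;> simp <;> ring
      simp_rw [hpt]
      rw [lint_aff (1 + a⁻¹*x + a⁻¹*b.re) a⁻¹ (-(a⁻¹*b.im)) (by nlinarith) ha0']
      congr 1
      ring
    calc ⨆ x > (0:ℝ), ∫⁻ y : ℝ, (‖(f ∘ ψ) (↑x + ↑y * Complex.I)‖₊ : ENNReal) ^ 2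
        = ⨆ x > (0:ℝ), ENNReal.ofReal (π / ((a⁻¹ + (a⁻¹*a⁻¹) * b.re) + (a⁻¹*a⁻¹) * x)) :=
          iSup_congr fun x => iSup_congr fun hx => hstep x hx
      _ = ENNReal.ofReal (π / (a⁻¹ + (a⁻¹*a⁻¹) * b.re)) :=
          sup_aff _ _ (by nlinarith) (by nlinarith)
  have hmul : ENNReal.ofReal (a⁻¹ ^ 2) * N (f ∘ ψ) = ENNReal.ofReal (π / (a + b.re)) := by
    rw [hNψ, ← ENNReal.ofReal_mul (by positivity)]
    congr 1
    have h1 : a⁻¹ + a⁻¹*a⁻¹*b.re ≠ 0 := by positivity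
    have h2 : a + b.re ≠ 0 := by positivity
    field_simp
  refine ⟨hNφ, hmul, ?_⟩
  rw [hmul, hNφ]
  rw [ENNReal.ofReal_lt_ofReal_iff (by positivity)]
  apply div_lt_div_of_pos_left Real.pi_pos (by nlinarith)
  nlinarith
end

section
/- Let a > 1 and let b ∈ ℂ with Re(b) > 0. Then for every function f : ℂ → ℂ, sup over x > 0 of ∫_ℝ |f(a·(x + i·y) + b)|² dy ≤ a⁻² · (sup over x > 0 of ∫_ℝ |f(a⁻¹·(x + i·y) + a⁻¹·conj(b))|² dy), where the integrals are Lebesgue integrals with values in [0, ∞]. (This says that for φ(w) = a·w + b the composition operator C_φ on the Hardy space H²(ℂ₊) satisfies ‖C_φ f‖ ≤ ‖C_φ* f‖, i.e. C_φ is cohyponormal, since C_φ* = a⁻¹·C_ψ with ψ(w) = a⁻¹·w + a⁻¹·conj(b).) -/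
open scoped ComplexConjugate ENNReal
open MeasureTheory

lemma lint_scale (g : ℝ → ℝ≥0∞) {a : ℝ} (ha : 0 < a) :
    ∫⁻ y : ℝ, g (a * y) = ENNReal.ofReal a⁻¹ * ∫⁻ y : ℝ, g y := by
  have h1 : ∫⁻ y : ℝ, g (a * y) =
      ∫⁻ y : ℝ, g y ∂(Measure.map (a * ·) volume) := by
    exact (lintegral_map_equiv g (MeasurableEquiv.mulLeft₀ a ha.ne')).symm
  rw [h1, Real.map_volume_mul_left ha.ne', lintegral_smul_measure,
    abs_of_pos (inv_pos.mpr ha), smul_eq_mul]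

lemma lint_affine (g : ℝ → ℝ≥0∞) {a : ℝ} (ha : 0 < a) (c : ℝ) :
    ∫⁻ y : ℝ, g (a * y + c) = ENNReal.ofReal a⁻¹ * ∫⁻ y : ℝ, g y := by
  rw [lint_scale (fun t => g (t + c)) ha, lintegral_add_right_eq_self (fun t => g t) c]

/-- For `a > 1` and `Re b > 0`, every `f : ℂ → ℂ` satisfies
`sup_{x>0} ∫_ℝ |f(a(x+iy)+b)|² dy ≤ a⁻² · sup_{x>0} ∫_ℝ |f(a⁻¹(x+iy)+a⁻¹ conj b)|² dy`,
i.e. the composition operator `C_φ` with `φ(w) = a·w+b` is cohyponormal on `H²(ℂ₊)`. -/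
theorem cohyponormal_of_a_gt_one
    (a : ℝ) (ha : 1 < a) (b : ℂ) (hb : 0 < b.re) (f : ℂ → ℂ) :
    (⨆ x > (0 : ℝ), ∫⁻ y : ℝ,
        (‖f ((a : ℂ) * (↑x + ↑y * Complex.I) + b)‖₊ : ENNReal) ^ 2)
      ≤ ENNReal.ofReal (a⁻¹ ^ 2) *
        ⨆ x > (0 : ℝ), ∫⁻ y : ℝ,
          (‖f ((a : ℂ)⁻¹ * (↑x + ↑y * Complex.I) + (a : ℂ)⁻¹ * conj b)‖₊ : ENNReal) ^ 2 := by
  have ha0 : 0 < a := lt_trans one_pos ha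
  have ha0' : (0:ℝ) < a⁻¹ := inv_pos.mpr ha0
  set I : ℝ → ℝ≥0∞ := fun u => ∫⁻ y : ℝ, (‖f ((u : ℂ) + (y : ℂ) * Complex.I)‖₊ : ENNReal) ^ 2
    with hI
  -- rewrite LHS inner integrals
  have hL : ∀ x : ℝ, (∫⁻ y : ℝ,
      (‖f ((a : ℂ) * (↑x + ↑y * Complex.I) + b)‖₊ : ENNReal) ^ 2)
      = ENNReal.ofReal a⁻¹ * I (a * x + b.re) := by
    intro x
    have harg : ∀ y : ℝ, (a : ℂ) * (↑x + ↑y * Complex.I) + b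
        = ((a * x + b.re : ℝ) : ℂ) + ((a * y + b.im : ℝ) : ℂ) * Complex.I := by
      intro y
      conv_lhs => rw [← Complex.re_add_im b]
      push_cast; ring
    simp_rw [harg]
    exact lint_affine (fun t => (‖f (((a * x + b.re : ℝ) : ℂ) + (t : ℂ) * Complex.I)‖₊ : ENNReal) ^ 2) ha0 b.im
  have hR : ∀ x : ℝ, (∫⁻ y : ℝ,
      (‖f ((a : ℂ)⁻¹ * (↑x + ↑y * Complex.I) + (a : ℂ)⁻¹ * conj b)‖₊ : ENNReal) ^ 2)
      = ENNReal.ofReal a * I (a⁻¹ * (x + b.re)) := by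
    intro x
    have harg : ∀ y : ℝ, (a : ℂ)⁻¹ * (↑x + ↑y * Complex.I) + (a : ℂ)⁻¹ * conj b
        = ((a⁻¹ * (x + b.re) : ℝ) : ℂ) + ((a⁻¹ * y + (-(a⁻¹ * b.im)) : ℝ) : ℂ) * Complex.I := by
      intro y
      have : conj b = (b.re : ℂ) - (b.im : ℂ) * Complex.I := by
        rw [Complex.ext_iff]; simp
      rw [this]; push_cast
      field_simp
      ring
    simp_rw [harg]
    have := lint_affine (fun t => (‖f (((a⁻¹ * (x + b.re) : ℝ) : ℂ) + (t : ℂ) * Complex.I)‖₊ : ENNReal) ^ 2) ha0' (-(a⁻¹ * b.im))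
    rw [this, inv_inv]
  calc (⨆ x > (0 : ℝ), ∫⁻ y : ℝ,
        (‖f ((a : ℂ) * (↑x + ↑y * Complex.I) + b)‖₊ : ENNReal) ^ 2)
      = ⨆ x > (0:ℝ), ENNReal.ofReal a⁻¹ * I (a * x + b.re) := by
        apply iSup_congr; intro x; apply iSup_congr; intro _; exact hL x
    _ ≤ ENNReal.ofReal (a⁻¹ ^ 2) * ⨆ x > (0:ℝ), ENNReal.ofReal a * I (a⁻¹ * (x + b.re)) := by
        apply iSup₂_le
        intro x hx
        have ha1 : (0:ℝ) < a - 1 := by linarith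
        have hx' : (0:ℝ) < a^2 * x + (a - 1) * b.re := by positivity
        have heq : a⁻¹ * ((a^2 * x + (a - 1) * b.re) + b.re) = a * x + b.re := by
          field_simp; ring
        calc ENNReal.ofReal a⁻¹ * I (a * x + b.re)
            = ENNReal.ofReal (a⁻¹ ^ 2) * (ENNReal.ofReal a * I (a * x + b.re)) := by
              rw [← mul_assoc, ← ENNReal.ofReal_mul (by positivity)]
              congr 2
              field_simp
          _ ≤ _ := by
              gcongr
              rw [← heq]
              exact le_iSup₂_of_le (a^2 * x + (a - 1) * b.re) hx' le_rfl
    _ = ENNReal.ofReal (a⁻¹ ^ 2) *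
        ⨆ x > (0 : ℝ), ∫⁻ y : ℝ,
          (‖f ((a : ℂ)⁻¹ * (↑x + ↑y * Complex.I) + (a : ℂ)⁻¹ * conj b)‖₊ : ENNReal) ^ 2 := by
        congr 1
        apply iSup_congr; intro x; apply iSup_congr; intro _; exact (hR x).symm
end

section
/- Let φ : ℂ₊ → ℂ₊ be a self-map of the right half-plane. Then the identity u + φ(w) = φ(u) + w holds for all u, w ∈ ℂ₊ if and only if there exists b ∈ ℂ with Re(b) ≥ 0 such that φ(w) = w + b for all w ∈ ℂ₊. (The identity is equivalent to the reproducing-kernel equation K_{conj(u)}(φ(w)) = K_{conj(φ(u))}(w), which characterizes J-symmetry of the composition operator C_φ on H²(ℂ₊); thus C_φ is J-symmetric exactly for the parabolic symbols φ(w) = w + b, Re(b) ≥ 0.) -/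
/-- For a self-map `φ` of the right half-plane, the kernel identity
`u + φ(w) = φ(u) + w` (for all `u, w ∈ ℂ₊`), which characterizes `J`-symmetry of `C_φ` on
`H²(ℂ₊)`, holds if and only if `φ(w) = w + b` for some `b` with `Re b ≥ 0`. -/
theorem J_symmetric_iff_parabolic
    (φ : ℂ → ℂ) (hφ : ∀ w : ℂ, 0 < w.re → 0 < (φ w).re) :
    (∀ u w : ℂ, 0 < u.re → 0 < w.re → u + φ w = φ u + w) ↔
    (∃ b : ℂ, 0 ≤ b.re ∧ ∀ w : ℂ, 0 < w.re → φ w = w + b) := by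
  constructor
  · intro h
    have hkey : ∀ w : ℂ, 0 < w.re → φ w = w + (φ 1 - 1) := by
      intro w hw
      have := h 1 w (by norm_num) hw
      linear_combination this
    refine ⟨φ 1 - 1, ?_, hkey⟩
    by_contra hb
    push_neg at hb
    set b : ℂ := φ 1 - 1
    have hε : (0:ℝ) < -b.re / 2 := by linarith
    have h1 : 0 < (φ ((-b.re / 2 : ℝ) : ℂ)).re := hφ _ (by simpa using hε)
    rw [hkey _ (by simpa using hε)] at h1
    simp only [Complex.add_re, Complex.ofReal_re] at h1
    linarith
  · rintro ⟨b, hb, hφb⟩ u w hu hw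
    rw [hφb u hu, hφb w hw]
    ring
end

section
/- For functions on ℂ define (Vf)(w) = (√2/(1+w))·f((1−w)/(1+w)), (V⁻¹g)(z) = (√2/(1+z))·g((1−z)/(1+z)), (J_𝕌 h)(z) = conj(h(conj(z))), and (C_{Φ₀}h)(z) = h(−z). Then for every f : ℂ → ℂ and every w ∈ ℂ₊, (V(J_𝕌(C_{Φ₀}(V⁻¹f))))(w) = (1/w)·conj(f(1/conj(w))). (This computes that the conjugation W₀ = V J_𝕌 C_{Φ₀} V⁻¹ on the Hardy space H²(ℂ₊) is given by (W₀f)(w) = (1/w)·conj(f(1/conj(w))).) -/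
open scoped ComplexConjugate

/-- With `V`, `V⁻¹` the standard isometric isomorphisms between `H²(𝕌)` and `H²(ℂ₊)`,
`J_𝕌` the conjugation `h ↦ conj ∘ h ∘ conj` and `C_{Φ₀} h = h(−·)`, the conjugation
`W₀ = V J_𝕌 C_{Φ₀} V⁻¹` on `H²(ℂ₊)` is given by `(W₀ f)(w) = (1/w)·conj(f(1/conj w))`. -/
theorem W0_formula
    (V Vinv JU CPhi : (ℂ → ℂ) → (ℂ → ℂ))
    (hV : ∀ (f : ℂ → ℂ) (w : ℂ),
      V f w = (↑(Real.sqrt 2) / (1 + w)) * f ((1 - w) / (1 + w)))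
    (hVinv : ∀ (g : ℂ → ℂ) (z : ℂ),
      Vinv g z = (↑(Real.sqrt 2) / (1 + z)) * g ((1 - z) / (1 + z)))
    (hJU : ∀ (h : ℂ → ℂ) (z : ℂ), JU h z = conj (h (conj z)))
    (hCPhi : ∀ (h : ℂ → ℂ) (z : ℂ), CPhi h z = h (-z)) :
    ∀ (f : ℂ → ℂ) (w : ℂ), 0 < w.re →
      V (JU (CPhi (Vinv f))) w = (1 / w) * conj (f (1 / conj w)) := by
  intro f w hw
  have hw0 : w ≠ 0 := fun h => by simp [h] at hw
  have h1w : (1 : ℂ) + w ≠ 0 := by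
    intro h
    have : (1 + w).re = 0 := by rw [h]; simp
    simp [Complex.add_re] at this
    linarith
  have hcw0 : conj w ≠ 0 := by
    simpa using (starRingEnd ℂ).injective.ne_iff.mpr hw0
  have h1cw : (1 : ℂ) + conj w ≠ 0 := by
    intro h
    apply h1w
    have := congrArg (conj) h
    simpa using this
  rw [hV, hJU, hCPhi, hVinv]
  have hconj : conj ((1 - w) / (1 + w)) = (1 - conj w) / (1 + conj w) := by
    simp [map_div₀]
  rw [hconj]
  have hden : 1 + -((1 - conj w) / (1 + conj w)) = 2 * conj w / (1 + conj w) := by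
    field_simp
    ring
  have hnum : 1 - -((1 - conj w) / (1 + conj w)) = 2 / (1 + conj w) := by
    field_simp
    ring
  rw [hden, hnum]
  have harg : (2 / (1 + conj w)) / (2 * conj w / (1 + conj w)) = 1 / conj w := by
    field_simp
  rw [harg]
  rw [map_mul, map_div₀, map_div₀]
  simp only [Complex.conj_ofReal, map_mul, map_add, map_one, map_ofNat,
    Complex.conj_conj]
  have h2 : (Real.sqrt 2 : ℂ) * (Real.sqrt 2 : ℂ) = 2 := by
    norm_cast
    rw [Real.mul_self_sqrt] ; norm_num
  field_simp
  linear_combination (starRingEnd ℂ) (f (1 / (starRingEnd ℂ) w)) * h2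
end

section
/- Let φ : ℂ₊ → ℂ₊ be a self-map of the right half-plane. Then the identity φ(u)·w = u·φ(w) holds for all u, w ∈ ℂ₊ if and only if there exists a real number a > 0 such that φ(w) = a·w for all w ∈ ℂ₊. (The identity is the reproducing-kernel form of W₀-symmetry of the composition operator C_φ on H²(ℂ₊); thus C_φ is W₀-symmetric exactly for the symbols φ(w) = a·w with a > 0.) -/
/-- For a self-map `φ` of the right half-plane, the kernel identity
`φ(u)·w = u·φ(w)` (for all `u, w ∈ ℂ₊`), which characterizes `W₀`-symmetry of `C_φ` on
`H²(ℂ₊)`, holds if and only if `φ(w) = a·w` for some real `a > 0`. -/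
theorem W0_symmetric_iff_dilation
    (φ : ℂ → ℂ) (hφ : ∀ w : ℂ, 0 < w.re → 0 < (φ w).re) :
    (∀ u w : ℂ, 0 < u.re → 0 < w.re → φ u * w = u * φ w) ↔
    (∃ a : ℝ, 0 < a ∧ ∀ w : ℂ, 0 < w.re → φ w = (a : ℂ) * w) := by
  constructor
  · intro h
    set c := φ 1 with hc
    have hkey : ∀ w : ℂ, 0 < w.re → φ w = c * w := by
      intro w hw
      have := h 1 w (by norm_num) hw
      simpa using this.symm
    -- show c.im = 0
    have him : c.im = 0 := by
      by_contra hne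
      -- choose t with x - t*y ≤ 0
      set t : ℝ := (c.re + 1) / c.im
      have hw : (0:ℝ) < (1 + t * Complex.I).re := by simp
      have hre := hφ _ hw
      rw [hkey _ hw] at hre
      have : (c * (1 + t * Complex.I)).re = c.re - t * c.im := by
        simp [Complex.mul_re]; ring
      rw [this] at hre
      have ht : t * c.im = c.re + 1 := by
        exact div_mul_cancel₀ (c.re + 1) hne
      rw [ht] at hre
      linarith
    refine ⟨c.re, hφ 1 (by norm_num), ?_⟩
    intro w hw
    rw [hkey w hw]
    congr 1
    apply Complex.ext <;> simp [him]
  · rintro ⟨a, ha, hfa⟩ u w hu hw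
    rw [hfa u hu, hfa w hw]; ring
end

section
/- Let φ : ℂ₊ → ℂ₊ be a self-map of the right half-plane and let r ∈ ℝ. Then the identity (φ(u + i·r) − i·r)·w = u·(φ(w + i·r) − i·r) holds for all u, w ∈ ℂ₊ if and only if there exists a real number a > 0 such that φ(w) = a·w + i·(1−a)·r for all w ∈ ℂ₊. (This is the kernel-level form of J_r-symmetry of C_φ on H²(ℂ₊), where J_r = C_τ⁻¹ W₀ C_τ with τ(w) = w + i·r; it characterizes the composition operators that are J_r-symmetric for some r ∈ ℝ as exactly those induced by the maps φ(w) = a·w + i·b with a > 0 and b real, i.e. the hyperbolic automorphisms of ℂ₊ when a ≠ 1.) -/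
/-- For a self-map `φ` of the right half-plane and `r ∈ ℝ`, the kernel identity
`(φ(u + ir) − ir)·w = u·(φ(w + ir) − ir)` (for all `u, w ∈ ℂ₊`), which is the kernel-level
form of `J_r`-symmetry of `C_φ` on `H²(ℂ₊)`, holds if and only if
`φ(w) = a·w + i(1−a)r` for some real `a > 0`. -/
theorem Jr_symmetric_iff_hyperbolic_automorphism
    (φ : ℂ → ℂ) (hφ : ∀ w : ℂ, 0 < w.re → 0 < (φ w).re) (r : ℝ) :
    (∀ u w : ℂ, 0 < u.re → 0 < w.re →
        (φ (u + Complex.I * r) - Complex.I * r) * w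
          = u * (φ (w + Complex.I * r) - Complex.I * r)) ↔
    (∃ a : ℝ, 0 < a ∧ ∀ w : ℂ, 0 < w.re →
        φ w = (a : ℂ) * w + Complex.I * (1 - (a : ℂ)) * r) := by
  constructor
  · intro h
    set c : ℂ := φ (1 + Complex.I * r) - Complex.I * r with hc
    have key : ∀ w : ℂ, 0 < w.re → φ (w + Complex.I * r) = c * w + Complex.I * r := by
      intro w hw
      have h1 := h 1 w (by norm_num) hw
      rw [← hc] at h1
      linear_combination -h1
    have key2 : ∀ w : ℂ, 0 < w.re → φ w = c * w + Complex.I * (1 - c) * r := by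
      intro w hw
      have h1 : (0:ℝ) < (w - Complex.I * r).re := by simpa using hw
      have h2 := key (w - Complex.I * r) h1
      rw [show w - Complex.I * (r:ℂ) + Complex.I * r = w by ring] at h2
      rw [h2]; ring
    have hre : ∀ w : ℂ, 0 < w.re → 0 < c.re * w.re - c.im * w.im + c.im * r := by
      intro w hw
      have h1 := hφ w hw
      rw [key2 w hw] at h1
      have : ((c * w + Complex.I * (1 - c) * r : ℂ)).re
          = c.re * w.re - c.im * w.im + c.im * r := by
        simp [Complex.add_re, Complex.mul_re, Complex.mul_im, Complex.I_re, Complex.I_im,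
          Complex.sub_re, Complex.sub_im, Complex.one_re, Complex.one_im,
          Complex.ofReal_re, Complex.ofReal_im]
      rw [this] at h1
      exact h1
    have him : c.im = 0 := by
      by_contra hb
      set y : ℝ := (c.re + c.im * r + 1) / c.im with hy
      have hre1 : (0:ℝ) < (1 + Complex.I * (y:ℂ)).re := by simp
      have h1 := hre (1 + Complex.I * (y:ℂ)) hre1
      have hrw : (1 + Complex.I * (y:ℂ)).re = 1 ∧ (1 + Complex.I * (y:ℂ)).im = y := by
        constructor <;> simp
      have hcy : c.im * y = c.re + c.im * r + 1 := by
        rw [hy]; field_simp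
      rw [hrw.1, hrw.2] at h1
      linarith
    have ha : 0 < c.re := by
      have h1 := hre 1 (by norm_num)
      simpa [him] using h1
    refine ⟨c.re, ha, fun w hw => ?_⟩
    have hcc : ((c.re : ℂ)) = c := Complex.ext (by simp) (by simp [him])
    rw [hcc]
    exact key2 w hw
  · rintro ⟨a, ha, hf⟩ u w hu hw
    have h1 : φ (u + Complex.I * r) = (a : ℂ) * (u + Complex.I * r) + Complex.I * (1 - (a:ℂ)) * r := by
      apply hf; simpa using hu
    have h2 : φ (w + Complex.I * r) = (a : ℂ) * (w + Complex.I * r) + Complex.I * (1 - (a:ℂ)) * r := by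
      apply hf; simpa using hw
    rw [h1, h2]; ring
end
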